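/- Let d, m be natural numbers, let Q = (q_{ij}) : R^d -> R^{d x d} have C^1 entries with symmetric positive semidefinite values, and let V : R^d -> R^{m x m} satisfy <V(x) xi, xi> <= -|xi|^2 for all x in R^d and xi in R^m. Let T > 0 and let u : (0,T) x R^d -> R^m be such that for each k the component u_k has a first partial derivative in t and second partial derivatives in x, and suppose u satisfies the system d/dt u_k = div(Q grad u_k) - u_k + (V u)_k for k = 1, ..., m at every point. Then at every point of (0,T) x R^d one has d/dt |u|^2 <= div(Q grad |u|^2) - 4 |u|^2, where the divergence form operator acts in the x variables. -/

import Mathlib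

open Set Matrix

/-- The partial derivative in the `i`-th coordinate direction of `ℝ^d`. -/
noncomputable def pd {d : ℕ} (i : Fin d) (f : (Fin d → ℝ) → ℝ) (x : Fin d → ℝ) : ℝ :=
  fderiv ℝ f x (Pi.single i 1)

/-- `div (Q ∇ f) = ∑ i j, D_i (q_{ij} D_j f)`. -/
noncomputable def divQgrad {d : ℕ} (q : Fin d → Fin d → (Fin d → ℝ) → ℝ)
    (f : (Fin d → ℝ) → ℝ) (x : Fin d → ℝ) : ℝ :=
  ∑ i, ∑ j, pd i (fun y => q i j y * pd j f y) x

lemma pd_mul {d : ℕ} {a b : (Fin d → ℝ) → ℝ} {x : Fin d → ℝ}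
    (ha : DifferentiableAt ℝ a x) (hb : DifferentiableAt ℝ b x) (i : Fin d) :
    pd i (fun y => a y * b y) x = pd i a x * b x + a x * pd i b x := by
  unfold pd
  rw [fderiv_fun_mul ha hb]
  simp [ContinuousLinearMap.add_apply, ContinuousLinearMap.smul_apply, smul_eq_mul]
  ring

lemma pd_sum {d : ℕ} {ι : Type*} (s : Finset ι) (f : ι → (Fin d → ℝ) → ℝ) (x : Fin d → ℝ)
    (hf : ∀ k ∈ s, DifferentiableAt ℝ (f k) x) (i : Fin d) :
    pd i (fun y => ∑ k ∈ s, f k y) x = ∑ k ∈ s, pd i (f k) x := by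
  unfold pd
  rw [fderiv_fun_sum hf]
  simp

lemma contDiff_pd {d : ℕ} {f : (Fin d → ℝ) → ℝ} (hf : ContDiff ℝ 2 f) (j : Fin d) :
    ContDiff ℝ 1 (pd j f) := by
  have h := hf.fderiv_right (m := 1) (by norm_num)
  exact h.clm_apply contDiff_const

lemma divQgrad_sum_sq {d m : ℕ} (q : Fin d → Fin d → (Fin d → ℝ) → ℝ)
    (hq : ∀ i j, ContDiff ℝ 1 (q i j))
    (f : Fin m → (Fin d → ℝ) → ℝ) (hf : ∀ k, ContDiff ℝ 2 (f k)) (x : Fin d → ℝ) :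
    divQgrad q (fun z => ∑ k, f k z ^ 2) x
      = ∑ k, 2 * f k x * divQgrad q (f k) x
        + 2 * ∑ k, ∑ i, ∑ j, pd i (f k) x * q i j x * pd j (f k) x := by
  have hfd : ∀ k (y : Fin d → ℝ), DifferentiableAt ℝ (f k) y :=
    fun k y => ((hf k).differentiable (by norm_num)).differentiableAt
  have hpdd : ∀ k j (y : Fin d → ℝ), DifferentiableAt ℝ (pd j (f k)) y :=
    fun k j y => ((contDiff_pd (hf k) j).differentiable (by norm_num)).differentiableAt
  have hqd : ∀ i j (y : Fin d → ℝ), DifferentiableAt ℝ (q i j) y :=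
    fun i j y => ((hq i j).differentiable (by norm_num)).differentiableAt
  have hgrad : ∀ (j : Fin d) (y : Fin d → ℝ),
      pd j (fun z => ∑ k, f k z ^ 2) y = ∑ k, 2 * f k y * pd j (f k) y := by
    intro j y
    rw [pd_sum Finset.univ (fun k z => f k z ^ 2) y (fun k _ => ((hfd k y).pow 2)) j]
    refine Finset.sum_congr rfl fun k _ => ?_
    have hsq : (fun z => f k z ^ 2) = fun z => f k z * f k z := by funext z; ring
    rw [hsq, pd_mul (hfd k y) (hfd k y)]
    ring
  have key : ∀ i j,
      pd i (fun y => q i j y * pd j (fun z => ∑ k, f k z ^ 2) y) x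
        = ∑ k, (2 * f k x * pd i (fun y => q i j y * pd j (f k) y) x
            + 2 * (pd i (f k) x * q i j x * pd j (f k) x)) := by
    intro i j
    have h1 : (fun y => q i j y * pd j (fun z => ∑ k, f k z ^ 2) y)
        = fun y => ∑ k, q i j y * (2 * f k y * pd j (f k) y) := by
      funext y; rw [hgrad j y, Finset.mul_sum]
    rw [h1]
    rw [pd_sum Finset.univ (fun k y => q i j y * (2 * f k y * pd j (f k) y)) x
      (fun k _ => (hqd i j x).mul
        (((differentiableAt_const (2:ℝ)).mul (hfd k x)).mul (hpdd k j x))) i]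
    refine Finset.sum_congr rfl fun k _ => ?_
    have hb : DifferentiableAt ℝ (fun y => 2 * f k y * pd j (f k) y) x :=
      ((differentiableAt_const (2:ℝ)).mul (hfd k x)).mul (hpdd k j x)
    have e1 := pd_mul (a := q i j) (b := fun y => 2 * f k y * pd j (f k) y)
      (hqd i j x) hb i
    have e2 := pd_mul (a := fun y => 2 * f k y) (b := pd j (f k))
      ((differentiableAt_const (2:ℝ)).mul (hfd k x)) (hpdd k j x) i
    have e3 := pd_mul (a := fun _ => (2:ℝ)) (b := f k)
      (differentiableAt_const 2) (hfd k x) i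
    have e4 := pd_mul (a := q i j) (b := pd j (f k)) (hqd i j x) (hpdd k j x) i
    have e5 : pd i (fun _ : Fin d → ℝ => (2:ℝ)) x = 0 := by simp [pd]
    rw [e1, e2, e3, e4, e5]
    ring
  unfold divQgrad
  calc ∑ i, ∑ j, pd i (fun y => q i j y * pd j (fun z => ∑ k, f k z ^ 2) y) x
      = ∑ i, ∑ j, ∑ k, (2 * f k x * pd i (fun y => q i j y * pd j (f k) y) x
            + 2 * (pd i (f k) x * q i j x * pd j (f k) x)) :=
        Finset.sum_congr rfl fun i _ => Finset.sum_congr rfl fun j _ => key i j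
    _ = ∑ k, ∑ i, ∑ j, (2 * f k x * pd i (fun y => q i j y * pd j (f k) y) x
            + 2 * (pd i (f k) x * q i j x * pd j (f k) x)) := by
        calc ∑ i, ∑ j, ∑ k, (2 * f k x * pd i (fun y => q i j y * pd j (f k) y) x
              + 2 * (pd i (f k) x * q i j x * pd j (f k) x))
            = ∑ i, ∑ k, ∑ j, (2 * f k x * pd i (fun y => q i j y * pd j (f k) y) x
              + 2 * (pd i (f k) x * q i j x * pd j (f k) x)) :=
              Finset.sum_congr rfl fun i _ => Finset.sum_comm
          _ = ∑ k, ∑ i, ∑ j, (2 * f k x * pd i (fun y => q i j y * pd j (f k) y) x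
              + 2 * (pd i (f k) x * q i j x * pd j (f k) x)) := Finset.sum_comm
    _ = ∑ k, 2 * f k x * divQgrad q (f k) x
        + 2 * ∑ k, ∑ i, ∑ j, pd i (f k) x * q i j x * pd j (f k) x := by
        rw [Finset.mul_sum, ← Finset.sum_add_distrib]
        refine Finset.sum_congr rfl fun k _ => ?_
        unfold divQgrad
        rw [Finset.mul_sum, Finset.mul_sum, ← Finset.sum_add_distrib]
        refine Finset.sum_congr rfl fun i _ => ?_
        rw [Finset.mul_sum, Finset.mul_sum, ← Finset.sum_add_distrib]


/-- If `u` solves `∂ₜ uₖ = div(Q ∇ uₖ) - uₖ + (Vu)ₖ` on `(0,T) × ℝ^d`, with `Q(x)` symmetric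
positive semidefinite and `⟨V(x)ξ, ξ⟩ ≤ -|ξ|²`, then `∂ₜ |u|² ≤ div(Q ∇ |u|²) - 4|u|²`. -/
theorem parabolic_inequality_for_square (d m : ℕ)
    (q : Fin d → Fin d → (Fin d → ℝ) → ℝ) (hq : ∀ i j, ContDiff ℝ 1 (q i j))
    (hsymm : ∀ i j x, q i j x = q j i x)
    (hpsd : ∀ (x : Fin d → ℝ) (ξ : Fin d → ℝ), 0 ≤ ∑ i, ∑ j, ξ i * q i j x * ξ j)
    (V : (Fin d → ℝ) → Matrix (Fin m) (Fin m) ℝ)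
    (hV : ∀ (x : Fin d → ℝ) (ξ : Fin m → ℝ), (V x).mulVec ξ ⬝ᵥ ξ ≤ -(ξ ⬝ᵥ ξ))
    (T : ℝ) (hT : 0 < T)
    (u : Fin m → ℝ → (Fin d → ℝ) → ℝ)
    (hut : ∀ k (t : ℝ), t ∈ Ioo 0 T → ∀ x, DifferentiableAt ℝ (fun s => u k s x) t)
    (hux : ∀ k (t : ℝ), t ∈ Ioo 0 T → ContDiff ℝ 2 (u k t))
    (hpde : ∀ k (t : ℝ), t ∈ Ioo 0 T → ∀ x,
      deriv (fun s => u k s x) t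
        = divQgrad q (u k t) x - u k t x + (V x).mulVec (fun l => u l t x) k) :
    ∀ (t : ℝ), t ∈ Ioo 0 T → ∀ x,
      deriv (fun s => ∑ k, u k s x ^ 2) t
        ≤ divQgrad q (fun z => ∑ k, u k t z ^ 2) x - 4 * ∑ k, u k t x ^ 2 := by
  intro t ht x
  have hderiv : deriv (fun s => ∑ k, u k s x ^ 2) t
      = ∑ k, 2 * u k t x * deriv (fun s => u k s x) t := by
    rw [deriv_fun_sum (A := fun k s => u k s x ^ 2) (fun k _ => ((hut k t ht x).pow 2))]
    refine Finset.sum_congr rfl fun k _ => ?_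
    rw [deriv_fun_pow (hut k t ht x) 2]
    norm_num
  rw [hderiv, divQgrad_sum_sq q hq (fun k => u k t) (fun k => hux k t ht) x]
  have hrw : ∑ k, 2 * u k t x * deriv (fun s => u k s x) t
      = ∑ k, 2 * u k t x * divQgrad q (u k t) x - 2 * ∑ k, u k t x ^ 2
        + 2 * ((V x).mulVec (fun l => u l t x) ⬝ᵥ (fun l => u l t x)) := by
    simp only [dotProduct]
    rw [Finset.mul_sum, Finset.mul_sum, ← Finset.sum_sub_distrib, ← Finset.sum_add_distrib]
    refine Finset.sum_congr rfl fun k _ => ?_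
    rw [hpde k t ht x]
    ring
  rw [hrw]
  have hGamma : 0 ≤ ∑ k, ∑ i, ∑ j, pd i (u k t) x * q i j x * pd j (u k t) x :=
    Finset.sum_nonneg fun k _ => hpsd x (fun i => pd i (u k t) x)
  have hVu : (V x).mulVec (fun l => u l t x) ⬝ᵥ (fun l => u l t x) ≤ -(∑ k, u k t x ^ 2) := by
    have h := hV x (fun l => u l t x)
    have : (fun l => u l t x) ⬝ᵥ (fun l => u l t x) = ∑ k, u k t x ^ 2 := by
      simp [dotProduct, pow_two]
    rwa [this] at h
  linarith
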